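/- Let G and K be groups with K finitely generated, and let H be a finitely generated subgroup of K. If the word problem of K (with respect to some finite choice of generators) is accepted by a G-automaton, then the word problem of H (with respect to any finite choice of generators) is accepted by a G-automaton. -/

import Mathlib

/-- A finite (nondeterministic) automaton over a monoid M: finitely many states,
a finite list of M-labelled edges, an initial state and a set of accepting states. -/
structure MAutomaton (M : Type*) [Monoid M] where
  numStates : ℕ
  edges : List (Fin numStates × M × Fin numStates)
  start : Fin numStates
  accept : Fin numStates → Prop

namespace MAutomaton

/-- `A.Reaches p m q` holds if there is a path in A from state p to state q whose
label (the product of the edge labels) is m. -/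
inductive Reaches {M : Type*} [Monoid M] (A : MAutomaton M) :
    Fin A.numStates → M → Fin A.numStates → Prop
  | refl (p : Fin A.numStates) : Reaches A p 1 p
  | step {p q r : Fin A.numStates} {e m : M} :
      (p, e, q) ∈ A.edges → Reaches A q m r → Reaches A p (e * m) r

end MAutomaton

/-- A G-automaton over the alphabet X is a finite automaton over the monoid
G × X*; it accepts w ∈ X* if some path from the initial state to an accepting
state is labelled (1, w). -/
def GAccepts {G : Type*} [Group G] {X : Type*}
    (A : MAutomaton (G × FreeMonoid X)) (w : FreeMonoid X) : Prop :=
  ∃ f, A.accept f ∧ A.Reaches A.start (1, w) f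

namespace WPAux

/-- Reachability with an explicit path length. -/
inductive ReachesN {M : Type*} [Monoid M] (A : MAutomaton M) :
    ℕ → Fin A.numStates → M → Fin A.numStates → Prop
  | refl (p : Fin A.numStates) : ReachesN A 0 p 1 p
  | step {k : ℕ} {p q r : Fin A.numStates} {e m : M} :
      (p, e, q) ∈ A.edges → ReachesN A k q m r → ReachesN A (k+1) p (e * m) r

theorem reaches_iff_reachesN {M : Type*} [Monoid M] (A : MAutomaton M)
    {p q : Fin A.numStates} {m : M} :
    A.Reaches p m q ↔ ∃ k, ReachesN A k p m q := by
  constructor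
  · intro h
    induction h with
    | refl p => exact ⟨0, .refl p⟩
    | step he _ ih => obtain ⟨k, hk⟩ := ih; exact ⟨k+1, .step he hk⟩
  · rintro ⟨k, hk⟩
    induction hk with
    | refl p => exact .refl p
    | step he _ ih => exact .step he ih

/-- Nondeterministic automaton with an arbitrary state type. -/
structure NA (M : Type) [Monoid M] (S : Type) where
  edges : List (S × M × S)
  start : S
  accept : S → Prop

namespace NA

inductive Reaches {M S : Type} [Monoid M] (A : NA M S) : S → M → S → Prop
  | refl (p : S) : Reaches A p 1 p
  | step {p q r : S} {e m : M} :
      (p, e, q) ∈ A.edges → Reaches A q m r → Reaches A p (e * m) r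

def Accepts {G X S : Type} [Group G] (A : NA (G × FreeMonoid X) S)
    (w : FreeMonoid X) : Prop :=
  ∃ f, A.accept f ∧ A.Reaches A.start (1, w) f

end NA

theorem le_foldr_max (l : List ℕ) (b : ℕ) : b ≤ l.foldr max b := by
  induction l with
  | nil => exact le_rfl
  | cons a l ih => exact le_trans ih (le_max_right _ _)

theorem mem_le_foldr_max {l : List ℕ} {a : ℕ} (b : ℕ) (h : a ∈ l) : a ≤ l.foldr max b := by
  induction l with
  | nil => cases h
  | cons c l ih =>
    rcases List.mem_cons.mp h with h | h
    · exact h ▸ le_max_left _ _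
    · exact le_trans (ih h) (le_max_right _ _)

/-- Any NA with an injective encoding of states into ℕ can be realised as an MAutomaton
with the same accepted language. -/
theorem NA.exists_mauto {G X S : Type} [Group G] (ι : S → ℕ) (hι : Function.Injective ι)
    (A : NA (G × FreeMonoid X) S) :
    ∃ B : MAutomaton (G × FreeMonoid X), ∀ w, GAccepts B w ↔ A.Accepts w := by
  classical
  set N : ℕ := (A.edges.map (fun e => max (ι e.1) (ι e.2.2))).foldr max (ι A.start) + 1 with hN
  have hNpos : 0 < N := Nat.succ_pos _
  set f : S → Fin N := fun s => ⟨ι s % N, Nat.mod_lt _ hNpos⟩ with hf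
  have hstart : ι A.start < N := Nat.lt_succ_of_le (le_foldr_max _ _)
  have hedge : ∀ e ∈ A.edges, ι e.1 < N ∧ ι e.2.2 < N := by
    intro e he
    have h1 : max (ι e.1) (ι e.2.2) ≤ N - 1 :=
      mem_le_foldr_max _ (List.mem_map_of_mem he)
    constructor
    · exact Nat.lt_succ_of_le (le_trans (le_max_left _ _) h1)
    · exact Nat.lt_succ_of_le (le_trans (le_max_right _ _) h1)
  have hfval : ∀ s, ι s < N → (f s : ℕ) = ι s := fun s hs => Nat.mod_eq_of_lt hs
  have hinj : ∀ s s', ι s < N → ι s' < N → f s = f s' → s = s' := by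
    intro s s' hs hs' h
    apply hι
    have := congrArg Fin.val h
    rwa [hfval s hs, hfval s' hs'] at this
  set B : MAutomaton (G × FreeMonoid X) :=
    ⟨N, A.edges.map (fun e => (f e.1, e.2.1, f e.2.2)), f A.start,
      fun t => ∃ s, ι s < N ∧ f s = t ∧ A.accept s⟩ with hB
  have hBedge : ∀ x, x ∈ B.edges ↔ ∃ e ∈ A.edges, (f e.1, e.2.1, f e.2.2) = x := by
    intro x; exact List.mem_map
  refine ⟨B, fun w => ?_⟩
  have key : ∀ t₁ m t₂, B.Reaches t₁ m t₂ →
      ∀ s₁, ι s₁ < N → f s₁ = t₁ →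
      ∃ s₂, ι s₂ < N ∧ f s₂ = t₂ ∧ A.Reaches s₁ m s₂ := by
    intro t₁ m t₂ h
    induction h with
    | refl p => exact fun s₁ h1 h2 => ⟨s₁, h1, h2, .refl s₁⟩
    | step he hr ih =>
      intro s₁ h1 h2
      rw [hBedge] at he
      obtain ⟨e, heA, heq⟩ := he
      obtain ⟨hp, hq⟩ := hedge e heA
      obtain ⟨h1', h2'⟩ := Prod.mk.injEq .. ▸ heq
      obtain ⟨h2a, h2b⟩ := Prod.mk.injEq .. ▸ h2'
      -- h1' : f e.1 = t₁ (source), h2a : e.2.1 = label, h2b : f e.2.2 = target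
      obtain ⟨s₂, hs2N, hfs2, hr2⟩ := ih e.2.2 hq h2b
      have hse : s₁ = e.1 := hinj _ _ h1 hp (h2 ▸ h1'.symm)
      refine ⟨s₂, hs2N, hfs2, ?_⟩
      have : (s₁, e.2.1, e.2.2) ∈ A.edges := by rw [hse]; exact heA
      exact h2a ▸ NA.Reaches.step this hr2
  have fwd : ∀ s₁ m s₂, A.Reaches s₁ m s₂ → B.Reaches (f s₁) m (f s₂) := by
    intro s₁ m s₂ h
    induction h with
    | refl p => exact .refl _
    | step he hr ih =>
      refine .step ?_ ih
      rw [hBedge]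
      exact ⟨_, he, rfl⟩
  constructor
  · rintro ⟨t, ⟨s', hs', hfs', hacc⟩, hr⟩
    obtain ⟨s₂, hs2N, hfs2, hr2⟩ := key _ _ _ hr A.start hstart rfl
    have : s₂ = s' := hinj _ _ hs2N hs' (hfs2.trans hfs'.symm)
    subst this
    exact ⟨s₂, hacc, hr2⟩
  · rintro ⟨s', hacc, hr⟩
    have hend : ∀ s₁ m s₂, A.Reaches s₁ m s₂ → ι s₁ < N → ι s₂ < N := by
      intro s₁ m s₂ h
      induction h with
      | refl p => exact id
      | step he hr ih => exact fun _ => ih (hedge _ he).2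
    exact ⟨f s', ⟨s', hend _ _ _ hr hstart, rfl, hacc⟩, fwd _ _ _ hr⟩

def allLists {α : Type} (xs : List α) : ℕ → List (List α)
  | 0 => [[]]
  | k+1 => [] :: xs.flatMap (fun x => (allLists xs k).map (x :: ·))

theorem mem_allLists {α : Type} {xs : List α} (hxs : ∀ a : α, a ∈ xs) :
    ∀ k (l : List α), l.length ≤ k → l ∈ allLists xs k := by
  intro k
  induction k with
  | zero =>
    intro l hl
    rw [List.length_eq_zero_iff.mp (Nat.le_zero.mp hl)]
    exact List.mem_singleton.mpr rfl
  | succ k ih =>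
    intro l hl
    cases l with
    | nil => exact List.mem_cons_self
    | cons a t =>
      refine List.mem_cons_of_mem _ ?_
      rw [List.mem_flatMap]
      exact ⟨a, hxs a, List.mem_map_of_mem (ih t (Nat.succ_le_succ_iff.mp hl))⟩

variable {G X Y : Type} [Group G]

/-- The simulating automaton: states are pairs (state of A, pending word in X*). -/
def mkB (A : MAutomaton (G × FreeMonoid X)) (φ : FreeMonoid Y →* FreeMonoid X)
    (LY : List Y) (UL : List (FreeMonoid X)) :
    NA (G × FreeMonoid Y) (Fin A.numStates × FreeMonoid X) where
  edges :=
    (A.edges.flatMap fun e => UL.map fun u' =>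
      ((e.1, e.2.1.2 * u'), (e.2.1.1, 1), (e.2.2, u')))
    ++ (LY.flatMap fun y => UL.flatMap fun u => (List.finRange A.numStates).map fun p =>
      ((p, u), ((1 : G), FreeMonoid.of y), (p, u * φ (FreeMonoid.of y))))
  start := (A.start, 1)
  accept := fun s => A.accept s.1 ∧ s.2 = 1

theorem mem_mkB_edges {A : MAutomaton (G × FreeMonoid X)} {φ : FreeMonoid Y →* FreeMonoid X}
    {LY : List Y} {UL : List (FreeMonoid X)} {x} :
    x ∈ (mkB A φ LY UL).edges ↔
      (∃ e ∈ A.edges, ∃ u' ∈ UL, ((e.1, e.2.1.2 * u'), (e.2.1.1, (1 : FreeMonoid Y)), (e.2.2, u')) = x)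
      ∨ (∃ y ∈ LY, ∃ u ∈ UL, ∃ p : Fin A.numStates,
          ((p, u), ((1 : G), FreeMonoid.of y), (p, u * φ (FreeMonoid.of y))) = x) := by
  simp [mkB]

theorem mkB_sound {A : MAutomaton (G × FreeMonoid X)} {φ : FreeMonoid Y →* FreeMonoid X}
    {LY : List Y} {UL : List (FreeMonoid X)} {s s' : Fin A.numStates × FreeMonoid X}
    {m : G × FreeMonoid Y} (h : (mkB A φ LY UL).Reaches s m s') :
    ∃ c, A.Reaches s.1 (m.1, c) s'.1 ∧ s.2 * φ m.2 = c * s'.2 := by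
  induction h with
  | refl p =>
    refine ⟨1, .refl _, ?_⟩
    simp
  | step he hr ih =>
    obtain ⟨c, hc, heq⟩ := ih
    rw [mem_mkB_edges] at he
    rcases he with ⟨e, heA, u', _, hx⟩ | ⟨y, _, u, _, p, hx⟩
    · cases hx
      refine ⟨e.2.1.2 * c, ?_, ?_⟩
      · simpa [Prod.mul_def] using MAutomaton.Reaches.step (show (e.1, (e.2.1.1, e.2.1.2), e.2.2) ∈ A.edges from heA) hc
      · simp only [Prod.snd_mul, Prod.fst_mul] at *
        rw [map_mul, map_one, one_mul]
        rw [mul_assoc, heq, mul_assoc]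
    · cases hx
      refine ⟨c, ?_, ?_⟩
      · simpa using hc
      · simp only [Prod.snd_mul, Prod.fst_mul] at *
        rw [map_mul, ← mul_assoc, heq]

theorem mkB_eps {A : MAutomaton (G × FreeMonoid X)} {φ : FreeMonoid Y →* FreeMonoid X}
    {LY : List Y} {UL : List (FreeMonoid X)} (hLY : ∀ y : Y, y ∈ LY)
    (hUL1 : (1 : FreeMonoid X) ∈ UL) :
    ∀ (l : List Y), φ (FreeMonoid.ofList l) = 1 → ∀ p : Fin A.numStates,
      (mkB A φ LY UL).Reaches (p, 1) ((1 : G), FreeMonoid.ofList l) (p, 1) := by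
  intro l
  induction l with
  | nil =>
    intro _ p
    exact NA.Reaches.refl _
  | cons y t ih =>
    intro hφ p
    have hsplit : FreeMonoid.ofList (y :: t) = FreeMonoid.of y * FreeMonoid.ofList t := rfl
    rw [hsplit, map_mul] at hφ
    have h2 : FreeMonoid.toList (φ (FreeMonoid.of y)) ++ FreeMonoid.toList (φ (FreeMonoid.ofList t)) = [] := by
      rw [← FreeMonoid.toList_mul, hφ]; rfl
    obtain ⟨hy, ht⟩ := List.append_eq_nil_iff.mp h2
    have hy1 : φ (FreeMonoid.of y) = 1 := by
      rw [← FreeMonoid.ofList_toList (φ (FreeMonoid.of y)), hy]; rfl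
    have ht1 : φ (FreeMonoid.ofList t) = 1 := by
      rw [← FreeMonoid.ofList_toList (φ (FreeMonoid.ofList t)), ht]; rfl
    have hedge : ((p, (1 : FreeMonoid X)), ((1 : G), FreeMonoid.of y),
        (p, (1 : FreeMonoid X) * φ (FreeMonoid.of y))) ∈ (mkB A φ LY UL).edges := by
      rw [mem_mkB_edges]
      exact Or.inr ⟨y, hLY y, 1, hUL1, p, rfl⟩
    have hrest := ih ht1 p
    have := NA.Reaches.step hedge (by rw [hy1, mul_one] at hedge ⊢; exact hrest)
    simpa [hsplit] using this

theorem mkB_complete {A : MAutomaton (G × FreeMonoid X)} {φ : FreeMonoid Y →* FreeMonoid X}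
    {LY : List Y} {UL : List (FreeMonoid X)} (hLY : ∀ y : Y, y ∈ LY)
    {V L : ℕ} (hUL : ∀ u : FreeMonoid X, u.toList.length ≤ V + L → u ∈ UL)
    (hV : ∀ e ∈ A.edges, (e.2.1.2).toList.length ≤ V)
    (hL : ∀ y : Y, (φ (FreeMonoid.of y)).toList.length ≤ L) :
    ∀ (n k : ℕ) (w : FreeMonoid Y) (u : FreeMonoid X) (p q : Fin A.numStates)
      (g : G) (c : FreeMonoid X),
      k + w.toList.length ≤ n → ReachesN A k p (g, c) q → u * φ w = c →
      u.toList.length ≤ V + L →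
      (mkB A φ LY UL).Reaches (p, u) (g, w) (q, 1) := by
  intro n
  induction n using Nat.strong_induction_on with
  | _ n ih =>
  intro k w u p q g c hn hr hc hlen
  cases hr with
  | refl =>
    -- g = 1, c = 1
    have h2 : FreeMonoid.toList u ++ FreeMonoid.toList (φ w) = [] := by
      rw [← FreeMonoid.toList_mul, hc]; rfl
    obtain ⟨hu, hw⟩ := List.append_eq_nil_iff.mp h2
    have hu1 : u = 1 := by rw [← FreeMonoid.ofList_toList u, hu]; rfl
    have hw1 : φ w = 1 := by
      rw [← FreeMonoid.ofList_toList (φ w), hw]; rfl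
    subst hu1
    rw [← FreeMonoid.ofList_toList w]
    apply mkB_eps hLY (hUL 1 (by simp [FreeMonoid.toList_one]))
    rw [FreeMonoid.ofList_toList]; exact hw1
  | @step k' p q' r e m he hr' =>
    -- (g, c) = e * m
    obtain ⟨eg, ev⟩ := e
    obtain ⟨mg, mc⟩ := m
    -- here g = eg * mg, c = ev * mc
    by_cases hcase : ev.toList.length ≤ u.toList.length
    · -- the edge word is a prefix of the pending word
      have hpre1 : ev.toList <+: (u * φ w).toList := by
        rw [hc]
        exact ⟨mc.toList, (FreeMonoid.toList_mul ev mc).symm⟩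
      have hpre2 : u.toList <+: (u * φ w).toList :=
        ⟨(φ w).toList, (FreeMonoid.toList_mul u (φ w)).symm⟩
      obtain ⟨t, ht⟩ := List.prefix_of_prefix_length_le hpre1 hpre2 hcase
      have hu : u = ev * FreeMonoid.ofList t := by
        rw [← FreeMonoid.ofList_toList u, ← ht]
        rfl
      have hmc : FreeMonoid.ofList t * φ w = mc := by
        apply mul_left_cancel (a := ev)
        rw [← mul_assoc, ← hu, hc]
      have htlen : t.length ≤ V + L := by
        have : ev.toList.length + t.length = u.toList.length := by
          rw [← ht]; simp
        omega
      have hedge : ((p, ev * FreeMonoid.ofList t), (eg, (1 : FreeMonoid Y)),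
          (q', FreeMonoid.ofList t)) ∈ (mkB A φ LY UL).edges := by
        rw [mem_mkB_edges]
        exact Or.inl ⟨(p, (eg, ev), q'), he, FreeMonoid.ofList t,
          hUL _ (by simpa using htlen), rfl⟩
      have hrest := ih (k' + w.toList.length) (by omega) k' w (FreeMonoid.ofList t)
        q' q mg mc le_rfl hr' hmc (by simpa using htlen)
      have := NA.Reaches.step hedge hrest
      rw [← hu] at this
      simpa using this
    · -- the pending word is shorter: emit a letter of w
      have hwne : w.toList ≠ [] := by
        intro hnil
        have hw1 : φ w = 1 := by
          have hw0 : w = 1 := by rw [← FreeMonoid.ofList_toList w, hnil]; rfl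
          rw [hw0, map_one]
        rw [hw1, mul_one] at hc
        have : ev.toList.length ≤ u.toList.length := by
          rw [hc]
          simp [FreeMonoid.toList_mul]
        exact hcase this
      obtain ⟨y, t, hyt⟩ := List.exists_cons_of_ne_nil hwne
      have hwsplit : w = FreeMonoid.of y * FreeMonoid.ofList t := by
        rw [← FreeMonoid.ofList_toList w, hyt]; rfl
      have hevlen : ev.toList.length ≤ V := hV (p, (eg, ev), q') he
      have hulen : u.toList.length < V := by omega
      have hedge : ((p, u), ((1 : G), FreeMonoid.of y),
          (p, u * φ (FreeMonoid.of y))) ∈ (mkB A φ LY UL).edges := by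
        rw [mem_mkB_edges]
        exact Or.inr ⟨y, hLY y, u, hUL u hlen, p, rfl⟩
      have hlen2 : (u * φ (FreeMonoid.of y)).toList.length ≤ V + L := by
        have := hL y
        rw [FreeMonoid.toList_mul, List.length_append]
        omega
      have hc2 : (u * φ (FreeMonoid.of y)) * φ (FreeMonoid.ofList t) = ev * mc := by
        rw [mul_assoc, ← map_mul, ← hwsplit, hc]
      have hrest := ih (k' + 1 + t.length)
        (by rw [hyt] at hn; simp at hn ⊢; omega)
        (k' + 1) (FreeMonoid.ofList t) (u * φ (FreeMonoid.of y)) p q (eg * mg)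
        (ev * mc) (by simp) (ReachesN.step he hr') hc2 hlen2
      have := NA.Reaches.step hedge hrest
      simpa [← hwsplit] using this

theorem toList_injective {α : Type} : Function.Injective (FreeMonoid.toList (α := α)) := by
  intro a b h
  rw [← FreeMonoid.ofList_toList a, h, FreeMonoid.ofList_toList]

end WPAux

/-- Proposition 2.1 (first part): if the word problem of a finitely generated group K
is accepted by a G-automaton with respect to some choice of generators, then the word
problem of any finitely generated subgroup H of K, with respect to any choice of
generators, is accepted by a G-automaton. -/
theorem subgroup_word_problem_accepted {G K : Type} [Group G] [Group K]
    (hK : Group.FG K) (H : Subgroup K) (hH : Group.FG H)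
    {X : Type} [Fintype X] (σ : FreeMonoid X →* K) (hσ : Function.Surjective σ)
    (A : MAutomaton (G × FreeMonoid X)) (hA : ∀ w, GAccepts A w ↔ σ w = 1)
    {Y : Type} [Fintype Y] (τ : FreeMonoid Y →* H) (hτ : Function.Surjective τ) :
    ∃ B : MAutomaton (G × FreeMonoid Y), ∀ w, GAccepts B w ↔ τ w = 1 := by
  classical
  open WPAux in
  -- choose a word in X* representing each generator image
  set φ0 : Y → FreeMonoid X := fun y => Classical.choose (hσ ((τ (FreeMonoid.of y) : H) : K)) with hφ0def
  have hφ0 : ∀ y, σ (φ0 y) = ((τ (FreeMonoid.of y) : H) : K) :=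
    fun y => Classical.choose_spec (hσ ((τ (FreeMonoid.of y) : H) : K))
  set φ : FreeMonoid Y →* FreeMonoid X := FreeMonoid.lift φ0 with hφdef
  have hkey : ∀ w, σ (φ w) = ((τ w : H) : K) := by
    intro w
    have heq : σ.comp φ = H.subtype.comp τ := by
      apply FreeMonoid.hom_eq
      intro y
      simp only [MonoidHom.comp_apply, hφdef, FreeMonoid.lift_eval_of]
      exact hφ0 y
    exact DFunLike.congr_fun heq w
  set V : ℕ := (A.edges.map fun e => (FreeMonoid.toList e.2.1.2).length).foldr max 1 with hVdef
  have hV : ∀ e ∈ A.edges, (FreeMonoid.toList e.2.1.2).length ≤ V :=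
    fun e he => mem_le_foldr_max _ (List.mem_map_of_mem he)
  set L : ℕ := ((Finset.univ : Finset Y).toList.map
      fun y => (FreeMonoid.toList (φ (FreeMonoid.of y))).length).foldr max 0 with hLdef
  have hL : ∀ y : Y, (FreeMonoid.toList (φ (FreeMonoid.of y))).length ≤ L :=
    fun y => mem_le_foldr_max _
      (List.mem_map_of_mem (Finset.mem_toList.mpr (Finset.mem_univ y)))
  set LY : List Y := (Finset.univ : Finset Y).toList with hLYdef
  have hLY : ∀ y : Y, y ∈ LY := fun y => Finset.mem_toList.mpr (Finset.mem_univ y)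
  set UL : List (FreeMonoid X) :=
    (allLists (Finset.univ : Finset X).toList (V + L)).map FreeMonoid.ofList with hULdef
  have hUL : ∀ u : FreeMonoid X, (FreeMonoid.toList u).length ≤ V + L → u ∈ UL := by
    intro u hu
    exact List.mem_map.mpr ⟨FreeMonoid.toList u,
      mem_allLists (fun a => Finset.mem_toList.mpr (Finset.mem_univ a)) _ _ hu,
      FreeMonoid.ofList_toList u⟩
  set B : NA (G × FreeMonoid Y) (Fin A.numStates × FreeMonoid X) := mkB A φ LY UL with hBdef
  -- encode the states
  letI : Encodable X := Fintype.toEncodable X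
  have hι : Function.Injective
      (fun s : Fin A.numStates × FreeMonoid X => Encodable.encode (s.1, FreeMonoid.toList s.2)) := by
    intro a b h
    have := Encodable.encode_injective h
    have h1 : a.1 = b.1 := congrArg Prod.fst this
    have h2 : FreeMonoid.toList a.2 = FreeMonoid.toList b.2 := congrArg Prod.snd this
    exact Prod.ext h1 (toList_injective h2)
  obtain ⟨B', hB'⟩ := NA.exists_mauto _ hι B
  refine ⟨B', fun w => ?_⟩
  rw [hB']
  constructor
  · rintro ⟨f, ⟨hacc, hf2⟩, hr⟩
    obtain ⟨c, hc1, hc2⟩ := mkB_sound hr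
    have hstart : B.start = (A.start, 1) := rfl
    rw [hstart] at hc1 hc2
    rw [hf2] at hc2
    simp only [one_mul, mul_one] at hc2
    have hGA : GAccepts A (φ w) := ⟨f.1, hacc, by rw [← hc2] at hc1; exact hc1⟩
    have := (hA _).mp hGA
    rw [hkey] at this
    exact OneMemClass.coe_eq_one.mp this
  · intro hw
    have hσφ : σ (φ w) = 1 := by rw [hkey, hw, OneMemClass.coe_one]
    obtain ⟨f, hacc, hr⟩ := (hA _).mpr hσφ
    obtain ⟨k, hk⟩ := (reaches_iff_reachesN A).mp hr
    have hpath := mkB_complete hLY hUL hV hL (k + (FreeMonoid.toList w).length) k w 1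
      A.start f 1 (φ w) le_rfl hk (one_mul _) (by simp)
    exact ⟨(f, 1), ⟨hacc, rfl⟩, hpath⟩
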